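/- If R and R' are canonically ordered trees that are r-isomorphic (isomorphic as rooted trees), then ws(R) = ws(R') and R and R' are o-isomorphic (isomorphic as ordered trees). -/

import Mathlib

inductive OTree : Type
  | node : List OTree → OTree

namespace OTree

def size : OTree → ℕ
  | .node cs => (cs.attach.map (fun c => size c.1)).sum + 1
decreasing_by simp only [OTree.node.sizeOf_spec]; have := List.sizeOf_lt_of_mem c.2; omega

def ws : OTree → List ℕ
  | .node cs => size (.node cs) :: (cs.attach.map (fun c => ws c.1)).flatten
decreasing_by simp only [OTree.node.sizeOf_spec]; have := List.sizeOf_lt_of_mem c.2; omega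

def preorder : OTree → List OTree
  | .node cs => .node cs :: (cs.attach.map (fun c => preorder c.1)).flatten
decreasing_by simp only [OTree.node.sizeOf_spec]; have := List.sizeOf_lt_of_mem c.2; omega

lemma size_pos (R : OTree) : 0 < R.size := by
  cases R with | node cs => simp only [OTree.size]; omega

end OTree

inductive RIso : OTree → OTree → Prop
  | node {cs cs' : List OTree} (l : List OTree) (hp : l.Perm cs')
      (hlen : cs.length = l.length)
      (h : ∀ (i : ℕ) (h1 : i < cs.length) (h2 : i < l.length), RIso cs[i] l[i]) :
      RIso (.node cs) (.node cs')

inductive Canonical : OTree → Prop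
  | node {cs : List OTree}
      (hchain : List.Chain' (fun u v => OTree.ws v ≤ OTree.ws u) cs)
      (h : ∀ c ∈ cs, Canonical c) : Canonical (.node cs)

def Centroidal {V : Type} [Fintype V] (G : SimpleGraph V) (u : V) : Prop :=
  ∀ v : ↥{x : V | x ≠ u},
    2 * Nat.card {w : ↥{x : V | x ≠ u} | (G.induce {x : V | x ≠ u}).Reachable v w}
      ≤ Fintype.card V

def IsParent (w : List ℕ) (i j : ℕ) : Prop :=
  i < j ∧ j < i + w.getD i 0 ∧ ∀ k, i < k → k < j → ¬ (j < k + w.getD k 0)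

def graphOf (R : OTree) : SimpleGraph (Fin R.size) :=
  SimpleGraph.fromRel (fun i j => IsParent R.ws i.1 j.1)

def rootIdx (R : OTree) : Fin R.size := ⟨0, R.size_pos⟩

def B (n : ℕ) : Set (List ℕ) := {s | ∃ R : OTree, Canonical R ∧ R.size = n ∧ R.ws = s}

def Succeq (s t : List ℕ) : Prop := t ≤ s ∨ s <+: t

def A (q n : ℕ) : Set (List ℕ × List ℕ) :=
  {p | p.1 ∈ B q ∧ p.2 ∈ B (n - q) ∧ Succeq p.1 p.2.tail}

def FwsUni {V : Type} [Fintype V] (G : SimpleGraph V) (s : List ℕ) : Prop :=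
  ∃ R : OTree, Canonical R ∧ R.ws = s ∧
    ∃ f : graphOf R ≃g G, Centroidal G (f (rootIdx R))

def FwsBi {V : Type} [Fintype V] (G : SimpleGraph V) (s : List ℕ) : Prop :=
  ∃ u v, u ≠ v ∧ G.Adj u v ∧ Centroidal G u ∧ Centroidal G v ∧
  ∃ A B : OTree, Canonical A ∧ Canonical B ∧ B.ws ≤ A.ws ∧ s = A.ws ++ B.ws ∧
  ∃ (fA : graphOf A ≃g (G.deleteEdges {s(u,v)}).induce
        {x | (G.deleteEdges {s(u,v)}).Reachable u x})
    (fB : graphOf B ≃g (G.deleteEdges {s(u,v)}).induce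
        {x | (G.deleteEdges {s(u,v)}).Reachable v x}),
    (fA (rootIdx A)).1 = u ∧ (fB (rootIdx B)).1 = v


namespace OTree

lemma ws_def (cs : List OTree) :
    ws (.node cs) = size (.node cs) :: (cs.map ws).flatten := by
  rw [ws]; congr 1; simp [List.attach_map_val]

lemma size_def (cs : List OTree) :
    size (.node cs) = (cs.map size).sum + 1 := by
  rw [size]; congr 2; simp [List.attach_map_val]

lemma ws_ne_nil (R : OTree) : R.ws ≠ [] := by
  cases R with | node cs => rw [ws_def]; simp

lemma ws_head (R : OTree) : R.ws.head? = some R.size := by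
  cases R with | node cs => rw [ws_def]; rfl

theorem ws_length : ∀ (R : OTree), R.ws.length = R.size
  | .node cs => by
    rw [ws_def, size_def, List.length_cons, List.length_flatten, List.map_map]
    have h : ∀ c ∈ cs, (List.length ∘ ws) c = size c := fun c hc => ws_length c
    rw [List.map_congr_left h]
termination_by R => sizeOf R
decreasing_by simp only [OTree.node.sizeOf_spec]; have := List.sizeOf_lt_of_mem hc; omega

lemma flatten_aux : ∀ (cs cs' : List OTree),
    (∀ a ∈ cs, ∀ b, a.ws = b.ws → a = b) →
    (cs.map ws).flatten = (cs'.map ws).flatten → cs = cs' := by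
  intro cs
  induction cs with
  | nil =>
    intro cs' _ h
    cases cs' with
    | nil => rfl
    | cons b cs' =>
      simp only [List.map_nil, List.flatten_nil, List.map_cons, List.flatten_cons] at h
      exact absurd (List.append_eq_nil_iff.mp h.symm).1 (ws_ne_nil b)
  | cons a cs ih =>
    intro cs' hinj h
    cases cs' with
    | nil =>
      simp only [List.map_nil, List.flatten_nil, List.map_cons, List.flatten_cons] at h
      exact absurd (List.append_eq_nil_iff.mp h).1 (ws_ne_nil a)
    | cons b cs' =>
      simp only [List.map_cons, List.flatten_cons] at h
      have hsz : a.size = b.size := by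
        have h0 := congrArg List.head? h
        rw [List.head?_append_of_ne_nil _ (ws_ne_nil a),
            List.head?_append_of_ne_nil _ (ws_ne_nil b), ws_head, ws_head] at h0
        exact Option.some.inj h0
      have hlen : a.ws.length = b.ws.length := by rw [ws_length, ws_length, hsz]
      obtain ⟨h1, h2⟩ := List.append_inj h hlen
      have hab : a = b := hinj a (List.mem_cons_self) b h1
      rw [hab, ih cs' (fun x hx y hy => hinj x (List.mem_cons_of_mem a hx) y hy) h2]

theorem ws_inj : ∀ (R R' : OTree), R.ws = R'.ws → R = R'
  | .node cs, .node cs', h => by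
    rw [ws_def, ws_def] at h
    have hf := (List.cons.inj h).2
    rw [flatten_aux cs cs' (fun a ha b hb => ws_inj a b hb) hf]
termination_by R _ => sizeOf R
decreasing_by simp only [OTree.node.sizeOf_spec]; have := List.sizeOf_lt_of_mem ha; omega

end OTree

theorem stmt4 (R R' : OTree) (hR : Canonical R) (hR' : Canonical R')
    (h : RIso R R') : R.ws = R'.ws ∧ R = R' := by
  revert hR hR'
  induction h with
  | @node cs cs' l hp hlen hchild ih =>
    intro hR hR'
    cases hR with | node hchain hcanon =>
    cases hR' with | node hchain' hcanon' =>
    have hcsl : cs = l := by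
      apply List.ext_getElem hlen
      intro i h1 h2
      exact (ih i h1 h2 (hcanon _ (List.getElem_mem h1))
        (hcanon' _ (hp.mem_iff.mp (List.getElem_mem h2)))).2
    have hperm : cs.Perm cs' := hcsl ▸ hp
    haveI : IsTrans OTree (fun u v => OTree.ws v ≤ OTree.ws u) :=
      ⟨fun _ _ _ h1 h2 => le_trans h2 h1⟩
    haveI : IsAntisymm (List ℕ) (fun x y : List ℕ => y ≤ x) :=
      ⟨fun _ _ h1 h2 => le_antisymm h2 h1⟩
    have hs1 : List.Pairwise (fun x y : List ℕ => y ≤ x) (cs.map OTree.ws) :=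
      List.pairwise_map.mpr (List.isChain_iff_pairwise.mp hchain)
    have hs2 : List.Pairwise (fun x y : List ℕ => y ≤ x) (cs'.map OTree.ws) :=
      List.pairwise_map.mpr (List.isChain_iff_pairwise.mp hchain')
    have hmeq : cs.map OTree.ws = cs'.map OTree.ws :=
      List.Perm.eq_of_pairwise (fun _ _ _ _ h1 h2 => le_antisymm h2 h1) hs1 hs2 (hperm.map OTree.ws)
    have hcc : cs = cs' :=
      List.map_injective_iff.mpr (fun a b => OTree.ws_inj a b) hmeq
    exact ⟨by rw [hcc], by rw [hcc]⟩
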